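/- Let g, b, bsh, θmax ∈ ℝ with b ≤ 0 and θmax > 0, and set k = (1 - cos θmax)/θmax². Let v_n, v_m, θ, ĉ ∈ ℝ satisfy ĉ ≤ 1 - k·θ². Define the LPAC reactive power flows q_{nm} = -(bsh/2)(2v_n - 1) - b(v_n - v_m) - b(1 - ĉ) - g·θ and q_{mn} = -(bsh/2)(2v_m - 1) - b(v_m - v_n) - b(1 - ĉ) + g·θ. Then q_{nm} + q_{mn} = -bsh·(v_n + v_m - 1) - 2b(1 - ĉ) ≥ -bsh·(v_n + v_m - 1) - 2b·k·θ². -/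
import Mathlib

/-- LPAC reactive power demand of a branch: exact expression and analytical lower bound. -/
theorem lpac_reactive_demand (g b bsh θmax : ℝ) (hb : b ≤ 0) (hθmax : 0 < θmax)
    (vn vm θ chat : ℝ) (hchat : chat ≤ 1 - (1 - Real.cos θmax) / θmax ^ 2 * θ ^ 2) :
    (-(bsh / 2) * (2 * vn - 1) - b * (vn - vm) - b * (1 - chat) - g * θ) +
      (-(bsh / 2) * (2 * vm - 1) - b * (vm - vn) - b * (1 - chat) + g * θ)
      = -bsh * (vn + vm - 1) - 2 * b * (1 - chat) ∧
    -bsh * (vn + vm - 1) - 2 * b * (1 - chat)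
      ≥ -bsh * (vn + vm - 1) - 2 * b * ((1 - Real.cos θmax) / θmax ^ 2) * θ ^ 2 := by
  constructor
  · ring
  · have h1 : (1 - Real.cos θmax) / θmax ^ 2 * θ ^ 2 ≤ 1 - chat := by linarith
    nlinarith [h1, hb]
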